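/- The u-row concatenation of a (K,F,Z,S) PDA is a (uK, u, F, Z, S) EPDA. -/

import Mathlib

open scoped Classical

/-- A `(K,L,F,Z,S)` extended placement delivery array (EPDA): an `F × K` array
with entries `none` (the star `★`) or `some s` with `s ∈ [S]`, satisfying
conditions C1–C4. -/
def IsEPDA (L Z : ℕ) {K F S : ℕ} (A : Fin F → Fin K → Option (Fin S)) : Prop :=
  -- C1: the star appears exactly `Z` times in each column
  (∀ k : Fin K, (Finset.univ.filter (fun j => A j k = none)).card = Z) ∧
  -- C2: every integer in `[S]` occurs at least once
  (∀ s : Fin S, ∃ j k, A j k = some s) ∧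
  -- C3: no integer appears more than once in any column
  (∀ (k : Fin K) (j₁ j₂ : Fin F) (s : Fin S),
    A j₁ k = some s → A j₂ k = some s → j₁ = j₂) ∧
  -- C4: in the subarray `A^(s)` (rows and columns containing `s`),
  -- no row contains more than `L` integer entries
  (∀ (s : Fin S) (j : Fin F), (∃ k, A j k = some s) →
    (Finset.univ.filter
      (fun k : Fin K => (∃ j', A j' k = some s) ∧ A j k ≠ none)).card ≤ L)

/-- A `g`-regular EPDA: each integer in `[S]` appears exactly `g` times. -/
def IsRegularEPDA (g : ℕ) {K F S : ℕ} (A : Fin F → Fin K → Option (Fin S)) : Prop :=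
  ∀ s : Fin S, (Finset.univ.filter (fun p : Fin F × Fin K => A p.1 p.2 = some s)).card = g

/-- A `(K,F,Z,S)` placement delivery array (PDA): conditions D1–D3. -/
def IsPDA (Z : ℕ) {K F S : ℕ} (P : Fin F → Fin K → Option (Fin S)) : Prop :=
  -- D1: the star appears exactly `Z` times in each column
  (∀ k : Fin K, (Finset.univ.filter (fun j => P j k = none)).card = Z) ∧
  -- D2: every integer in `[S]` occurs at least once
  (∀ s : Fin S, ∃ j k, P j k = some s) ∧
  -- D3: two distinct cells sharing an integer lie in distinct rows and columns,
  -- and the two cross positions are stars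
  (∀ (j₁ j₂ : Fin F) (k₁ k₂ : Fin K) (s : Fin S),
    P j₁ k₁ = some s → P j₂ k₂ = some s → (j₁, k₁) ≠ (j₂, k₂) →
    j₁ ≠ j₂ ∧ k₁ ≠ k₂ ∧ P j₁ k₂ = none ∧ P j₂ k₁ = none)

/-- The `u`-row concatenation of an `F × K` array: `u` copies of the array
placed side by side, giving an `F × (uK)` array. -/
def rowConcat (u : ℕ) {K F S : ℕ} (A : Fin F → Fin K → Option (Fin S)) :
    Fin F → Fin (u * K) → Option (Fin S) :=
  fun j k =>
    A j ⟨k.val % K, Nat.mod_lt _ (Nat.pos_of_ne_zero (fun h => absurd k.isLt (by subst h; simp)))⟩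

/-- The `u`-row concatenation of a `(K,F,Z,S)` PDA is a
`(uK, u, F, Z, S)` EPDA. -/

lemma count_mod {u K : ℕ} (r : ℕ) (hr : r < K) :
    (Finset.univ.filter (fun k : Fin (u * K) => k.val % K = r)).card = u := by
  have hK : 0 < K := lt_of_le_of_lt (Nat.zero_le _) hr
  have hf : ∀ k : Fin (u * K), k.val / K < u := fun k =>
    Nat.div_lt_of_lt_mul (Nat.lt_of_lt_of_eq k.2 (mul_comm u K))
  have hg : ∀ i : Fin u, i.val * K + r < u * K := fun i => by
    have := i.2
    calc i.val * K + r < i.val * K + K := by omega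
      _ = (i.val + 1) * K := by ring
      _ ≤ u * K := Nat.mul_le_mul_right _ (by omega)
  have key : (Finset.univ.filter (fun k : Fin (u * K) => k.val % K = r)).card
      = (Finset.univ : Finset (Fin u)).card := by
    refine Finset.card_nbij' (fun k => ⟨k.val / K, hf k⟩) (fun i => ⟨i.val * K + r, hg i⟩)
      ?_ ?_ ?_ ?_
    · intro k hk; exact Finset.mem_univ _
    · intro i _
      simp [Nat.mul_add_mod', Nat.mod_eq_of_lt hr]
    · intro k hk
      simp only [Finset.mem_coe, Finset.mem_filter, Finset.mem_univ, true_and] at hk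
      apply Fin.ext
      simp only
      conv_rhs => rw [← Nat.div_add_mod k.val K, hk]
      ring
    · intro i _
      apply Fin.ext
      simp only
      rw [mul_comm, Nat.mul_add_div hK, Nat.div_eq_of_lt hr, Nat.add_zero]
  simpa using key
theorem stmt6 {K F Z S : ℕ} (u : ℕ) (hu : 0 < u)
    (P : Fin F → Fin K → Option (Fin S)) (hP : IsPDA Z P) :
    IsEPDA u Z (rowConcat u P) := by
  obtain ⟨hD1, hD2, hD3⟩ := hP
  refine ⟨?_, ?_, ?_, ?_⟩
  · -- C1
    intro k
    exact hD1 _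
  · -- C2
    intro s
    obtain ⟨j, k, hjk⟩ := hD2 s
    have hk : (k : ℕ) < u * K := lt_of_lt_of_le k.2 (Nat.le_mul_of_pos_left K hu)
    refine ⟨j, ⟨k.val, hk⟩, ?_⟩
    simpa [rowConcat, Nat.mod_eq_of_lt k.2] using hjk
  · -- C3
    intro k j₁ j₂ s h₁ h₂
    by_contra hne
    have := hD3 j₁ j₂ _ _ s h₁ h₂ (by simp [hne])
    exact this.2.1 rfl
  · -- C4
    intro s j hj
    obtain ⟨k, hk⟩ := hj
    set k₀ : Fin K := ⟨k.val % K, _⟩ with hk₀def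
    have hk₀ : P j k₀ = some s := hk
    have hsub : (Finset.univ.filter
        (fun k : Fin (u * K) => (∃ j', rowConcat u P j' k = some s) ∧ rowConcat u P j k ≠ none))
        ⊆ Finset.univ.filter (fun k : Fin (u * K) => k.val % K = (k₀ : ℕ)) := by
      intro c hc
      simp only [Finset.mem_filter, Finset.mem_univ, true_and] at hc ⊢
      obtain ⟨⟨j', hj'⟩, hne⟩ := hc
      by_contra hcne
      have hcol : (⟨c.val % K, Nat.mod_lt _ (Nat.pos_of_ne_zero (fun h => absurd c.isLt (by subst h; simp)))⟩ : Fin K) ≠ k₀ := by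
        intro h; exact hcne (congrArg Fin.val h)
      have := hD3 j' j _ _ s hj' hk₀ (by
        intro h
        exact hcol (congrArg Prod.snd h))
      exact hne this.2.2.2
    calc (Finset.univ.filter
        (fun k : Fin (u * K) => (∃ j', rowConcat u P j' k = some s) ∧ rowConcat u P j k ≠ none)).card
        ≤ (Finset.univ.filter (fun k : Fin (u * K) => k.val % K = (k₀ : ℕ))).card :=
          Finset.card_le_card hsub
      _ = u := count_mod _ k₀.2
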